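/- Let t ≥ 2 be an integer, let T be a tree on t+1 vertices of diameter 2 (i.e. a star with t leaves), and let G be a finite simple graph on n vertices with average degree d = 2|E(G)|/n ≥ t. Then the number of injective homomorphisms from T to G is at least n·d(d−1)···(d−t+1), and equality holds if and only if G is d-regular (every vertex of G has degree d). -/

import Mathlib

/-- Number of injective graph homomorphisms ("labeled copies") from `T` to `G`. -/
noncomputable def monCount {α β : Type} (T : SimpleGraph α) (G : SimpleGraph β) : ℕ :=
  Nat.card {f : α → β // Function.Injective f ∧ ∀ ⦃u v : α⦄, T.Adj u v → G.Adj (f u) (f v)}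

/-- Average degree `d = 2|E(G)|/n` of a finite graph. -/
noncomputable def avgDeg {β : Type} [Fintype β] (G : SimpleGraph β) : ℝ :=
  2 * (Nat.card G.edgeSet) / (Fintype.card β)

/-- Falling factorial `(x)_t = x(x-1)⋯(x-t+1)` of a real number. -/
noncomputable def fallFact (x : ℝ) (t : ℕ) : ℝ := ∏ i ∈ Finset.range t, (x - (i : ℝ))

section StarCenter
open Finset Set SimpleGraph

lemma exists_star_center {α : Type} [Fintype α] (T : SimpleGraph α) (hT : T.IsTree)
    (hdiam_le : ∀ u v : α, T.dist u v ≤ 2) (hdiam_eq : ∃ u v : α, T.dist u v = 2) :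
    ∃ c : α, (∀ x, x ≠ c → T.Adj c x) ∧ (∀ x y, T.Adj x y → x = c ∨ y = c) := by
  classical
  obtain ⟨u, v, huv⟩ := hdiam_eq
  have hconn := hT.isConnected
  obtain ⟨w, hw⟩ := (hconn.preconnected u v).exists_walk_length_eq_dist
  rw [huv] at hw
  obtain ⟨c, h1, p, rfl⟩ : ∃ (c : α) (h : T.Adj u c) (p : T.Walk c v),
      w = SimpleGraph.Walk.cons h p := by
    cases w with
    | nil => simp at hw
    | cons h p => exact ⟨_, h, p, rfl⟩
  simp only [SimpleGraph.Walk.length_cons, Nat.succ_inj] at hw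
  obtain ⟨h2⟩ : ∃ _ : T.Adj c v, True := by
    cases p with
    | nil => simp at hw
    | cons h q =>
      cases q with
      | nil => exact ⟨h, trivial⟩
      | cons h' q' => simp at hw
  have h1' : T.Adj c u := h1.symm
  have hpu := isAcyclic_iff_path_unique.mp hT.IsAcyclic
  have hcenter : ∀ x, x ≠ c → T.Adj c x := by
    intro x hxc
    by_contra hadj
    have hd2 : T.dist c x = 2 := by
      have hp := (hconn.pos_dist_of_ne (Ne.symm hxc))
      have hne1 : T.dist c x ≠ 1 := fun h => hadj (dist_eq_one_iff_adj.mp h)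
      have := hdiam_le c x
      omega
    obtain ⟨w2, hw2⟩ := (hconn.preconnected c x).exists_walk_length_eq_dist
    rw [hd2] at hw2
    obtain ⟨y, hy1, q, rfl⟩ : ∃ (y : α) (h : T.Adj c y) (q : T.Walk y x),
        w2 = SimpleGraph.Walk.cons h q := by
      cases w2 with
      | nil => simp at hw2
      | cons h q => exact ⟨_, h, q, rfl⟩
    simp only [SimpleGraph.Walk.length_cons, Nat.succ_inj] at hw2
    obtain ⟨hy2⟩ : ∃ _ : T.Adj y x, True := by
      cases q with
      | nil => simp at hw2
      | cons h q' =>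
        cases q' with
        | nil => exact ⟨h, trivial⟩
        | cons h' q'' => simp at hw2
    -- pick w0 ∈ {u,v} with y ≠ w0
    obtain ⟨w0, hw0adj, hyw0⟩ : ∃ w0, T.Adj c w0 ∧ y ≠ w0 := by
      by_cases hyu : y = u
      · refine ⟨v, h2, ?_⟩
        intro h; subst h; subst hyu
        simp [SimpleGraph.dist_self] at huv
      · exact ⟨u, h1', hyu⟩
    have hxw0 : x ≠ w0 := fun h => hadj (h ▸ hw0adj)
    have hxy : T.Adj x y := hy2.symm
    have hyc : T.Adj y c := hy1.symm
    -- the path x - y - c - w0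
    let p1 : T.Walk x w0 :=
      SimpleGraph.Walk.cons hxy (SimpleGraph.Walk.cons hyc (SimpleGraph.Walk.cons hw0adj .nil))
    have hp1 : p1.IsPath := by
      simp only [p1, SimpleGraph.Walk.cons_isPath_iff, SimpleGraph.Walk.isPath_iff_eq_nil,
        SimpleGraph.Walk.support_cons, SimpleGraph.Walk.support_nil, List.mem_cons,
        List.mem_singleton, List.not_mem_nil]
      have n1 := hxy.ne
      have n2 := hyc.ne
      have n3 := hw0adj.ne
      tauto
    -- a short path from x to w0
    obtain ⟨w3, hw3⟩ := (hconn.preconnected x w0).exists_walk_length_eq_dist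
    have hlen3 : w3.bypass.length ≤ 2 := by
      calc w3.bypass.length ≤ w3.length := SimpleGraph.Walk.bypass_isPath w3 |> fun _ => w3.length_bypass_le
      _ ≤ 2 := by rw [hw3]; exact hdiam_le x w0
    have := hpu ⟨p1, hp1⟩ ⟨w3.bypass, w3.bypass_isPath⟩
    have hlp : p1.length = w3.bypass.length := by rw [congrArg (·.1.length) this]
    simp only [p1, SimpleGraph.Walk.length_cons, SimpleGraph.Walk.length_nil] at hlp
    omega
  refine ⟨c, hcenter, ?_⟩
  have hnb : T.neighborFinset c = Finset.univ.erase c := by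
    ext x
    simp only [SimpleGraph.mem_neighborFinset, Finset.mem_erase, Finset.mem_univ, and_true]
    exact ⟨fun h => h.ne', fun h => hcenter x h⟩
  have hdegc : T.degree c = Fintype.card α - 1 := by
    rw [← SimpleGraph.card_neighborFinset_eq_degree, hnb, Finset.card_erase_of_mem (Finset.mem_univ c),
      Finset.card_univ]
  have hedges : #T.edgeFinset + 1 = Fintype.card α := hT.card_edgeFinset
  have hsub : T.incidenceFinset c ⊆ T.edgeFinset := by
    intro e he
    rw [SimpleGraph.mem_incidenceFinset] at he
    exact SimpleGraph.mem_edgeFinset.mpr (T.incidenceSet_subset c he)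
  have hcard : #T.edgeFinset ≤ #(T.incidenceFinset c) := by
    rw [SimpleGraph.card_incidenceFinset_eq_degree, hdegc]
    omega
  have heq : T.incidenceFinset c = T.edgeFinset := Finset.eq_of_subset_of_card_le hsub hcard
  intro x y hxy
  have : s(x, y) ∈ T.edgeFinset := SimpleGraph.mem_edgeFinset.mpr hxy
  rw [← heq, SimpleGraph.mem_incidenceFinset] at this
  have hc : c ∈ s(x, y) := this.2
  rw [Sym2.mem_iff] at hc
  tauto
end StarCenter

open Finset Set SimpleGraph in
lemma monCount_star {α β : Type} [Fintype α] [Fintype β]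
    (T : SimpleGraph α) (G : SimpleGraph β) (c : α)
    (hc1 : ∀ x, x ≠ c → T.Adj c x) (hc2 : ∀ x y, T.Adj x y → x = c ∨ y = c) :
    monCount T G = ∑ v : β, (Nat.card (G.neighborSet v)).descFactorial (Fintype.card α - 1) := by
  classical
  set L := {x : α // x ≠ c} with hL
  have hiff : ∀ f : α → β,
      (Function.Injective f ∧ ∀ ⦃u v : α⦄, T.Adj u v → G.Adj (f u) (f v)) ↔
      (Function.Injective (fun x : L => f x.1) ∧ ∀ x : L, G.Adj (f c) (f x.1)) := by
    intro f
    constructor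
    · rintro ⟨hinj, hhom⟩
      exact ⟨fun a b h => Subtype.ext (hinj h), fun x => hhom (hc1 x.1 x.2)⟩
    · rintro ⟨hig, hadjg⟩
      constructor
      · intro a b h
        by_cases ha : a = c <;> by_cases hb : b = c
        · rw [ha, hb]
        · exact absurd (ha ▸ h) (hadjg ⟨b, hb⟩).ne
        · exact absurd (hb ▸ h).symm (hadjg ⟨a, ha⟩).ne
        · exact congrArg Subtype.val (hig (show (fun x : L => f x.1) ⟨a, ha⟩ = (fun x : L => f x.1) ⟨b, hb⟩ from h))
      · intro x y hxy
        rcases hc2 x y hxy with rfl | rfl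
        · exact hadjg ⟨y, hxy.ne'⟩
        · exact (hadjg ⟨x, hxy.ne⟩).symm
  let E1 : {f : α → β // Function.Injective f ∧ ∀ ⦃u v : α⦄, T.Adj u v → G.Adj (f u) (f v)} ≃
      {p : β × (L → β) // Function.Injective p.2 ∧ ∀ x : L, G.Adj p.1 (p.2 x)} :=
    (Equiv.funSplitAt c β).subtypeEquiv (by
      intro f
      simpa using hiff f)
  let E2 := Equiv.subtypeProdEquivSigmaSubtype
    (fun (v : β) (g : L → β) => Function.Injective g ∧ ∀ x : L, G.Adj v (g x))
  let E3 : ∀ v : β, {g : L → β // Function.Injective g ∧ ∀ x : L, G.Adj v (g x)} ≃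
      (L ↪ G.neighborSet v) := fun v =>
    { toFun := fun g => ⟨fun x => ⟨g.1 x, g.2.2 x⟩, fun a b h => g.2.1 (congrArg Subtype.val h)⟩
      invFun := fun e => ⟨fun x => (e x).1,
        ⟨fun a b h => e.injective (Subtype.ext h), fun x => (e x).2⟩⟩
      left_inv := fun g => rfl
      right_inv := fun e => by ext x; rfl }
  have key : monCount T G = Nat.card ((v : β) × (L ↪ G.neighborSet v)) := by
    unfold monCount
    exact Nat.card_congr ((E1.trans E2).trans (Equiv.sigmaCongrRight E3))
  rw [key, Nat.card_eq_fintype_card, Fintype.card_sigma]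
  congr 1
  funext v
  rw [Fintype.card_embedding_eq, Nat.card_eq_fintype_card]
  congr 1
  simp [L, Fintype.card_subtype_compl, Fintype.card_subtype_eq]
section Analysis
open Set

lemma fallFact_natCast (m t : ℕ) : fallFact (m : ℝ) t = (m.descFactorial t : ℝ) := by
  induction t with
  | zero => simp [fallFact]
  | succ k ih =>
    rw [fallFact, Finset.prod_range_succ, ← fallFact, ih, Nat.descFactorial_succ]
    rcases le_or_gt k m with h | h
    · push_cast [Nat.cast_sub h]; ring
    · simp [Nat.descFactorial_eq_zero_iff_lt.mpr h]

lemma fallFact_nonneg {t : ℕ} {x : ℝ} (hx : (t : ℝ) - 1 ≤ x) : 0 ≤ fallFact x t := by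
  apply Finset.prod_nonneg
  intro i hi
  rw [Finset.mem_range] at hi
  have : (i : ℝ) + 1 ≤ (t : ℝ) := by exact_mod_cast hi
  linarith

lemma fallFact_monoOn (t : ℕ) : MonotoneOn (fallFact · t) (Ici ((t : ℝ) - 1)) := by
  intro x hx y hy hxy
  apply Finset.prod_le_prod
  · intro i hi
    rw [Finset.mem_range] at hi
    have : (i : ℝ) + 1 ≤ (t : ℝ) := by exact_mod_cast hi
    simp only [Set.mem_Ici] at hx
    linarith
  · intro i _
    linarith

lemma fallFact_pos {t : ℕ} {x : ℝ} (hx : (t : ℝ) - 1 < x) : 0 < fallFact x t := by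
  apply Finset.prod_pos
  intro i hi
  rw [Finset.mem_range] at hi
  have : (i : ℝ) + 1 ≤ (t : ℝ) := by exact_mod_cast hi
  linarith

lemma fallFact_zero_of_lt {t m : ℕ} (h : m < t) : fallFact (m : ℝ) t = 0 :=
  Finset.prod_eq_zero (Finset.mem_range.mpr h) (by simp)

/-- product of a strictly convex monotone nonneg function with a nonneg affine factor. -/
lemma strictConvexOn_mul_affine {r c : ℝ} {f : ℝ → ℝ}
    (hf : StrictConvexOn ℝ (Ici r) f) (hm : MonotoneOn f (Ici r))
    (h0 : ∀ x ∈ Ici r, 0 ≤ f x) (hcr : c ≤ r) :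
    StrictConvexOn ℝ (Ici r) (fun x => f x * (x - c)) := by
  have aux : ∀ x ∈ Ici r, ∀ y ∈ Ici r, x < y → ∀ a b : ℝ, 0 < a → 0 < b → a + b = 1 →
      f (a * x + b * y) * ((a * x + b * y) - c) <
        a * (f x * (x - c)) + b * (f y * (y - c)) := by
    intro x hx y hy hxy a b ha hb hab
    have hx' : r ≤ x := hx
    have hy' : r ≤ y := hy
    have hb' : b = 1 - a := by linarith
    have hz : a * x + b * y ∈ Ici r := by
      simp only [Set.mem_Ici]
      have e1 : a * x + b * y - r = a * (x - r) + b * (y - r) := by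
        linear_combination r * hab
      nlinarith [mul_nonneg ha.le (sub_nonneg.2 hx'), mul_nonneg hb.le (sub_nonneg.2 hy')]
    have hzx : x < a * x + b * y := by
      have e2 : a * x + b * y - x = b * (y - x) := by linear_combination x * hab
      nlinarith [mul_pos hb (sub_pos.2 hxy)]
    have hzc : 0 < (a * x + b * y) - c := by linarith
    have h1 : f (a * x + b * y) < a * f x + b * f y := by
      have := hf.2 hx hy hxy.ne ha hb hab
      simpa [smul_eq_mul] using this
    have h2 : f (a * x + b * y) * ((a * x + b * y) - c) <
        (a * f x + b * f y) * ((a * x + b * y) - c) :=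
      mul_lt_mul_of_pos_right h1 hzc
    have hfxy : f x ≤ f y := hm hx hy hxy.le
    have hfx0 : 0 ≤ f x := h0 x hx
    have h3 : (a * f x + b * f y) * ((a * x + b * y) - c) ≤
        a * (f x * (x - c)) + b * (f y * (y - c)) := by
      subst hb'
      nlinarith [mul_nonneg (mul_nonneg ha.le (by linarith : (0:ℝ) ≤ 1 - a))
        (mul_nonneg (sub_nonneg.2 hfxy) (sub_nonneg.2 hxy.le))]
    linarith
  refine ⟨convex_Ici r, ?_⟩
  intro x hx y hy hxy a b ha hb hab
  simp only [smul_eq_mul]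
  rcases lt_or_gt_of_ne hxy with h | h
  · exact aux x hx y hy h a b ha hb hab
  · have := aux y hy x hx h b a hb ha (by linarith)
    calc f (a * x + b * y) * ((a * x + b * y) - c)
        = f (b * y + a * x) * ((b * y + a * x) - c) := by ring_nf
      _ < b * (f y * (y - c)) + a * (f x * (x - c)) := this
      _ = a * (f x * (x - c)) + b * (f y * (y - c)) := by ring

lemma fallFact_strictConvexOn (t : ℕ) (ht : 2 ≤ t) :
    StrictConvexOn ℝ (Ici ((t : ℝ) - 1)) (fallFact · t) := by
  induction t, ht using Nat.le_induction with
  | base =>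
    have h : (fallFact · 2) = fun x : ℝ => x ^ 2 - x := by
      funext x
      simp [fallFact, Finset.prod_range_succ]
      ring
    rw [h]
    have h1 : StrictConvexOn ℝ (univ : Set ℝ) (fun x : ℝ => x ^ 2) :=
      Even.strictConvexOn_pow (by norm_num) (by norm_num)
    have h2 : StrictConvexOn ℝ (univ : Set ℝ) (fun x : ℝ => x ^ 2 - x) := by
      have : StrictConvexOn ℝ (univ : Set ℝ) (fun x : ℝ => x ^ 2 + -x) :=
        h1.add_convexOn (concaveOn_id convex_univ).neg
      simpa [sub_eq_add_neg] using this
    exact (h2.subset (subset_univ _) (convex_Ici _))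
  | succ k hk ih =>
    have heq : (fallFact · (k + 1)) = fun x => fallFact x k * (x - (k : ℝ)) := by
      funext x
      rw [fallFact, Finset.prod_range_succ, ← fallFact]
    have hset : ((k + 1 : ℕ) : ℝ) - 1 = (k : ℝ) := by push_cast; ring
    rw [heq, hset]
    apply strictConvexOn_mul_affine
    · exact (ih.subset (Set.Ici_subset_Ici.mpr (by linarith)) (convex_Ici _))
    · exact (fallFact_monoOn k).mono (Set.Ici_subset_Ici.mpr (by linarith))
    · intro x hx
      simp only [Set.mem_Ici] at hx
      exact fallFact_nonneg (by linarith)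
    · exact le_refl _

open Polynomial in
lemma fallFact_differentiable (t : ℕ) : Differentiable ℝ (fallFact · t) := by
  have h : (fallFact · t) = fun x : ℝ => Polynomial.eval x (∏ i ∈ Finset.range t, (X - C (i : ℝ))) := by
    funext x
    simp [fallFact, Polynomial.eval_prod]
  rw [h]
  exact Polynomial.differentiable _

lemma fallFact_tangent (t : ℕ) (ht : 2 ≤ t) (d : ℝ) (hd : (t : ℝ) ≤ d) :
    ∃ s : ℝ, (∀ m : ℕ, fallFact d t + s * ((m : ℝ) - d) ≤ fallFact (m : ℝ) t) ∧
      (∀ m : ℕ, fallFact d t + s * ((m : ℝ) - d) = fallFact (m : ℝ) t → (m : ℝ) = d) := by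
  have hS := fallFact_strictConvexOn t ht
  have hdmem : d ∈ Set.Ici ((t : ℝ) - 1) := by simp only [Set.mem_Ici]; linarith
  have htd : (t : ℝ) - 1 < d := by linarith
  have hdd : DifferentiableAt ℝ (fallFact · t) d := (fallFact_differentiable t).differentiableAt
  set s : ℝ := deriv (fallFact · t) d with hs
  have tangent_lt : ∀ y ∈ Set.Ici ((t : ℝ) - 1), y ≠ d →
      fallFact d t + s * (y - d) < fallFact y t := by
    intro y hy hyd
    rcases lt_or_gt_of_ne hyd with h | h
    · have hsl := hS.slope_lt_deriv hy hdmem h hdd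
      simp only [slope_def_field] at hsl
      have hpos : 0 < d - y := by linarith
      rw [div_lt_iff₀ hpos] at hsl
      nlinarith
    · have hsl := hS.deriv_lt_slope hdmem hy h hdd
      simp only [slope_def_field] at hsl
      have hpos : 0 < y - d := by linarith
      rw [lt_div_iff₀ hpos] at hsl
      nlinarith
  have hFt1 : fallFact ((t : ℝ) - 1) t = 0 := by
    have h1 : 1 ≤ t := by omega
    have hcast : (((t : ℕ) - 1 : ℕ) : ℝ) = (t : ℝ) - 1 := by
      push_cast [Nat.cast_sub h1]; ring
    have := fallFact_zero_of_lt (t := t) (m := t - 1) (by omega)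
    rwa [hcast] at this
  have hFd_pos : 0 < fallFact d t := fallFact_pos htd
  have hs_pos : 0 < s := by
    have hsl := hS.slope_lt_deriv (Set.self_mem_Ici) hdmem htd hdd
    simp only [slope_def_field] at hsl
    rw [hFt1, sub_zero] at hsl
    have hpos : 0 < d - ((t : ℝ) - 1) := by linarith
    exact (div_pos hFd_pos hpos).trans hsl
  have hneg : fallFact d t + s * (((t : ℝ) - 1) - d) < 0 := by
    have := tangent_lt ((t : ℝ) - 1) Set.self_mem_Ici (by linarith)
    rwa [hFt1] at this
  refine ⟨s, ?_, ?_⟩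
  · intro m
    rcases eq_or_ne ((m : ℝ)) d with he | hne
    · rw [he]; simp
    · rcases le_or_gt ((t : ℝ) - 1) (m : ℝ) with hm | hm
      · exact (tangent_lt m hm hne).le
      · have hmt : m < t := by
          by_contra hc
          push_neg at hc
          have : (t : ℝ) ≤ (m : ℝ) := by exact_mod_cast hc
          linarith
        rw [fallFact_zero_of_lt hmt]
        have hlt : s * ((m : ℝ) - d) < s * (((t : ℝ) - 1) - d) := by
          apply mul_lt_mul_of_pos_left _ hs_pos
          linarith
        linarith
  · intro m heq
    by_contra hne
    rcases le_or_gt ((t : ℝ) - 1) (m : ℝ) with hm | hm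
    · exact absurd heq (ne_of_lt (tangent_lt m hm hne))
    · have hmt : m < t := by
        by_contra hc
        push_neg at hc
        have : (t : ℝ) ≤ (m : ℝ) := by exact_mod_cast hc
        linarith
      rw [fallFact_zero_of_lt hmt] at heq
      have h1 : s * ((m : ℝ) - d) < s * (((t : ℝ) - 1) - d) := by
        apply mul_lt_mul_of_pos_left _ hs_pos
        linarith
      linarith

end Analysis

open Finset in
theorem star_count_lower_bound_and_equality (t : ℕ) (ht : 2 ≤ t)
    (α β : Type) [Fintype α] [Fintype β]
    (T : SimpleGraph α) (G : SimpleGraph β)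
    (hT : T.IsTree) (hcard : Fintype.card α = t + 1)
    (hdiam_le : ∀ u v : α, T.dist u v ≤ 2) (hdiam_eq : ∃ u v : α, T.dist u v = 2)
    (hd : (t : ℝ) ≤ avgDeg G) :
    (Fintype.card β : ℝ) * fallFact (avgDeg G) t ≤ (monCount T G : ℝ) ∧
    ((monCount T G : ℝ) = (Fintype.card β : ℝ) * fallFact (avgDeg G) t ↔
      ∀ v : β, (Nat.card (G.neighborSet v) : ℝ) = avgDeg G) := by
  classical
  obtain ⟨c, hc1, hc2⟩ := exists_star_center T hT hdiam_le hdiam_eq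
  have hcount : monCount T G
      = ∑ v : β, (Nat.card (G.neighborSet v)).descFactorial (Fintype.card α - 1) :=
    monCount_star T G c hc1 hc2
  have hts : Fintype.card α - 1 = t := by omega
  rw [hts] at hcount
  have hdeg : ∀ v : β, Nat.card (G.neighborSet v) = G.degree v := fun v => by
    rw [Nat.card_eq_fintype_card, SimpleGraph.card_neighborSet_eq_degree]
  have hn0 : 0 < Fintype.card β := by
    rcases Nat.eq_zero_or_pos (Fintype.card β) with h | h
    · exfalso
      unfold avgDeg at hd
      rw [h] at hd
      norm_num at hd
      have h2 : (2 : ℝ) ≤ (t : ℝ) := by exact_mod_cast ht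
      linarith
    · exact h
  set d := avgDeg G with hdd
  have hnR : (0 : ℝ) < (Fintype.card β : ℝ) := by exact_mod_cast hn0
  have hE : (Nat.card G.edgeSet : ℝ) = (#G.edgeFinset : ℝ) := by
    rw [Nat.card_eq_fintype_card, SimpleGraph.edgeFinset_card]
  have hsum : (∑ v : β, (G.degree v : ℝ)) = (Fintype.card β : ℝ) * d := by
    have h1 : ∑ v : β, G.degree v = 2 * #G.edgeFinset := G.sum_degrees_eq_twice_card_edges
    have h2 : (∑ v : β, (G.degree v : ℝ)) = 2 * (#G.edgeFinset : ℝ) := by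
      exact_mod_cast congrArg (Nat.cast : ℕ → ℝ) h1
    rw [h2, hdd]
    unfold avgDeg
    rw [hE]
    rw [mul_div_assoc', eq_div_iff hnR.ne']
    ring
  obtain ⟨s, hle, heqc⟩ := fallFact_tangent t ht d hd
  have hterm : ∀ v ∈ Finset.univ (α := β),
      fallFact d t + s * ((G.degree v : ℝ) - d) ≤ ((G.degree v).descFactorial t : ℝ) := by
    intro v _
    rw [← fallFact_natCast]
    exact hle _
  have hsum_eq : ∑ v : β, (fallFact d t + s * ((G.degree v : ℝ) - d))
      = (Fintype.card β : ℝ) * fallFact d t := by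
    rw [Finset.sum_add_distrib, Finset.sum_const, Finset.card_univ, nsmul_eq_mul,
      ← Finset.mul_sum, Finset.sum_sub_distrib, Finset.sum_const, Finset.card_univ,
      nsmul_eq_mul, hsum]
    ring
  have hmc : (monCount T G : ℝ) = ∑ v : β, ((G.degree v).descFactorial t : ℝ) := by
    rw [hcount]
    push_cast
    refine Finset.sum_congr rfl fun v _ => by rw [hdeg v]
  constructor
  · rw [hmc, ← hsum_eq]
    exact Finset.sum_le_sum hterm
  · constructor
    · intro h
      rw [hmc, ← hsum_eq] at h
      have := (Finset.sum_eq_sum_iff_of_le hterm).mp h.symm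
      intro v
      rw [hdeg v]
      apply heqc
      rw [fallFact_natCast]
      exact this v (Finset.mem_univ v)
    · intro h
      rw [hmc]
      have : ∀ v : β, ((G.degree v).descFactorial t : ℝ) = fallFact d t := by
        intro v
        rw [← fallFact_natCast]
        have hv : ((G.degree v : ℕ) : ℝ) = d := by rw [← hdeg v]; exact h v
        rw [hv]
      rw [Finset.sum_congr rfl fun v _ => this v, Finset.sum_const, Finset.card_univ,
        nsmul_eq_mul]
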